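/- Let G be a countable directed graph, F a potential on G, β ∈ ℝ, and m an e^{βF}-conformal measure concentrated on P(G)_rec. Let v ∈ NW_G and let μ be a finite path with s(μ) = v. Then, up to an m-null set, Z(μ) is the disjoint union of the cylinders Z(μδ) over finite paths δ of positive length with s(δ) = r(μ) and r(δ) = v; that is, m(Z(μ) \ ⋃_δ Z(μδ)) = 0, the union being over all finite paths δ of positive length from r(μ) to v. -/

import Mathlib

open MeasureTheory
open scoped ENNReal

/-- A countable directed graph: countable sets of vertices and arrows together with
source and range maps. -/
structure CDG where
  V : Type
  A : Type
  countV : Countable V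
  countA : Countable A
  src : A → V
  rng : A → V

attribute [instance] CDG.countV CDG.countA

namespace CDG

/-- The space `P(G)` of infinite paths in `G`. -/
abbrev PathSpace (G : CDG) : Type :=
  {p : ℕ → G.A // ∀ i : ℕ, G.rng (p i) = G.src (p (i + 1))}

/-- The source vertex of an infinite path. -/
def isrc {G : CDG} (p : G.PathSpace) : G.V := G.src (p.1 0)

/-- The shift map `σ` on `P(G)`. -/
def shift {G : CDG} (p : G.PathSpace) : G.PathSpace :=
  ⟨fun i => p.1 (i + 1), fun i => p.2 (i + 1)⟩

/-- A countable set carries the discrete (Borel) σ-algebra. -/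
instance (G : CDG) : MeasurableSpace G.A := ⊤

/-- A finite path in `G`: a base vertex together with a (possibly empty) string of
composable arrows starting at the base vertex.  A finite path with no arrows is a vertex. -/
structure FinPath (G : CDG) where
  base : G.V
  arrows : List G.A
  head_src : ∀ a ∈ arrows.head?, G.src a = base
  chain : arrows.Chain' fun a b => G.rng a = G.src b

namespace FinPath

variable {G : CDG}

/-- The length `|μ|` of a finite path. -/
def length (μ : FinPath G) : ℕ := μ.arrows.length

/-- The source `s(μ)` of a finite path. -/
def fsrc (μ : FinPath G) : G.V := μ.base

/-- The range `r(μ)` of a finite path. -/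
def frng (μ : FinPath G) : G.V := μ.arrows.getLast?.elim μ.base G.rng

/-- A vertex, regarded as a finite path of length `0`. -/
def ofVertex (G : CDG) (v : G.V) : FinPath G :=
  ⟨v, [], by intro a ha; simp at ha, by simp [List.Chain']⟩

/-- Concatenation `μδ` of composable finite paths. -/
def concat (μ δ : FinPath G) (h : δ.base = μ.frng) : FinPath G where
  base := μ.base
  arrows := μ.arrows ++ δ.arrows
  head_src := by
    intro a ha
    cases hμ : μ.arrows with
    | nil =>
        rw [hμ] at ha
        simp only [List.nil_append] at ha
        have h1 : G.src a = δ.base := δ.head_src a ha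
        have h2 : μ.frng = μ.base := by simp [FinPath.frng, hμ]
        rw [h1, h, h2]
    | cons b l =>
        rw [hμ] at ha
        simp only [List.cons_append, List.head?_cons, Option.mem_def,
          Option.some.injEq] at ha
        cases ha
        exact μ.head_src _ (by rw [hμ]; rfl)
  chain := by
    refine List.IsChain.append μ.chain δ.chain ?_
    intro x hx y hy
    rw [Option.mem_def] at hx
    have h1 : μ.frng = G.rng x := by simp [FinPath.frng, hx]
    have h2 : G.src y = δ.base := δ.head_src y hy
    rw [h2, h, h1]

end FinPath

/-- The extension of a potential `F : G_Ar → ℝ` to finite paths: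
`F(μ) = Σ_{i} F(a_i)`, with `F(v) = 0` for vertices. -/
def pot {G : CDG} (F : G.A → ℝ) (μ : FinPath G) : ℝ := (μ.arrows.map F).sum

/-- The cylinder set `Z(μ)` of a finite path `μ`. -/
def cyl {G : CDG} (μ : FinPath G) : Set G.PathSpace :=
  {p | G.src (p.1 0) = μ.base ∧
    ∀ (i : ℕ) (h : i < μ.arrows.length), p.1 i = μ.arrows.get ⟨i, h⟩}

/-- The cylinder set `Z(v)` of a vertex `v`. -/
def cylV (G : CDG) (v : G.V) : Set G.PathSpace := {p | G.src (p.1 0) = v}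

/-- An `e^{βF}`-conformal measure on `P(G)`: a non-zero Borel measure giving finite
measure to each `Z(v)` and satisfying `m(σ(B ∩ Z(a))) = e^{βF(a)} m(B ∩ Z(a))`. -/
structure IsConformal (G : CDG) (F : G.A → ℝ) (β : ℝ)
    (m : Measure G.PathSpace) : Prop where
  ne_zero : m ≠ 0
  vert_fin : ∀ v : G.V, m (cylV G v) < ⊤
  conformal : ∀ (a : G.A) (B : Set G.PathSpace), MeasurableSet B →
      m (shift '' (B ∩ {p : G.PathSpace | p.1 0 = a})) =
        ENNReal.ofReal (Real.exp (β * F a)) * m (B ∩ {p : G.PathSpace | p.1 0 = a})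

/-- The set `NW_G` of non-wandering vertices: those supporting a loop. -/
def NW (G : CDG) : Set G.V :=
  {v | ∃ μ : FinPath G, 0 < μ.length ∧ μ.fsrc = v ∧ μ.frng = v}

/-- The set `V_∞` of sinks and infinite emitters. -/
def Vinf (G : CDG) : Set G.V :=
  {v | (∀ a : G.A, G.src a ≠ v) ∨ {a : G.A | G.src a = v}.Infinite}

/-- A hereditary subset of vertices. -/
def Hereditary (G : CDG) (H : Set G.V) : Prop :=
  ∀ a : G.A, G.src a ∈ H → G.rng a ∈ H

/-- A saturated subset of vertices. -/
def Saturated (G : CDG) (H : Set G.V) : Prop :=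
  ∀ v : G.V, v ∉ Vinf G → (∀ a : G.A, G.src a = v → G.rng a ∈ H) → v ∈ H

/-- `G` is cofinal when the only non-empty hereditary and saturated subset of
vertices is the set of all vertices. -/
def Cofinal (G : CDG) : Prop :=
  ∀ H : Set G.V, H.Nonempty → Hereditary G H → Saturated G H → H = Set.univ

/-- `P(G)_rec`: the paths passing through every arrow of `NW_Ar` infinitely often. -/
def recSet (G : CDG) : Set G.PathSpace :=
  {p | ∀ a : G.A, G.src a ∈ NW G → ∀ n : ℕ, ∃ i ≥ n, p.1 i = a}

/-- `P(G)_wan`: the paths visiting every vertex at most finitely many times. -/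
def wanSet (G : CDG) : Set G.PathSpace :=
  {p | ∀ v : G.V, {i : ℕ | G.src (p.1 i) = v}.Finite}

/-- The matrix entry `A(β)^n_{v,w} = Σ_μ e^{-βF(μ)} ∈ [0,∞]`, summing over finite
paths `μ` of length `n` with `s(μ) = v` and `r(μ) = w`. -/
noncomputable def Apow (G : CDG) (F : G.A → ℝ) (β : ℝ) (n : ℕ) (v w : G.V) : ℝ≥0∞ :=
  ∑' μ : {μ : FinPath G // μ.length = n ∧ μ.fsrc = v ∧ μ.frng = w},
    ENNReal.ofReal (Real.exp (-(β * pot F μ.1)))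

/-- An `A(β)`-harmonic vector: non-zero, finite, non-negative, and harmonic at
every vertex. -/
def IsHarmonicVec (G : CDG) (F : G.A → ℝ) (β : ℝ) (ψ : G.V → ℝ≥0∞) : Prop :=
  ψ ≠ 0 ∧ (∀ v : G.V, ψ v ≠ ⊤) ∧
    ∀ v : G.V, ψ v =
      ∑' a : {a : G.A // G.src a = v},
        ENNReal.ofReal (Real.exp (-(β * F a.1))) * ψ (G.rng a.1)

end CDG

open CDG in
lemma src_at_length {G : CDG} {μ : FinPath G} {p : G.PathSpace} (hp : p ∈ cyl μ) :
    G.src (p.1 μ.arrows.length) = μ.frng := by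
  rcases hp with ⟨hb, hget⟩
  cases hμa : μ.arrows with
  | nil => simp [FinPath.frng, hμa] at *; exact hb
  | cons b l =>
    rw [← hμa]
    have hlen : 0 < μ.arrows.length := by rw [hμa]; simp
    have hlast : μ.arrows.getLast? = some (μ.arrows.getLast (by rw [hμa]; simp)) :=
      List.getLast?_eq_getLast _
    have h1 : μ.frng = G.rng (μ.arrows.getLast (by rw [hμa]; simp)) := by
      simp [FinPath.frng, hlast]
    have h2 : μ.arrows.getLast (by rw [hμa]; simp)
        = μ.arrows.get ⟨μ.arrows.length - 1, by omega⟩ := by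
      rw [List.getLast_eq_getElem, List.get_eq_getElem]
    have h3 := hget (μ.arrows.length - 1) (by omega)
    have h4 := p.2 (μ.arrows.length - 1)
    have h5 : μ.arrows.length - 1 + 1 = μ.arrows.length := by omega
    rw [h5] at h4
    rw [← h4, h3, ← h2, h1]

open CDG in
/-- if `m` is `e^{βF}`-conformal and concentrated on `P(G)_rec`,
`v ∈ NW_G` and `μ` is a finite path with `s(μ) = v`, then up to an `m`-null set `Z(μ)`
is the union of the cylinders `Z(μδ)` over finite paths `δ` of positive length from
`r(μ)` to `v`. -/
theorem stmt14 (G : CDG) (F : G.A → ℝ) (β : ℝ) (m : MeasureTheory.Measure G.PathSpace)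
    (hm : IsConformal G F β m) (hrec : m (recSet G)ᶜ = 0)
    (v : G.V) (hv : v ∈ NW G) (μ : FinPath G) (hμ : μ.fsrc = v) :
    m (cyl μ \
      ⋃ δ : {δ : FinPath G // 0 < δ.length ∧ δ.fsrc = μ.frng ∧ δ.frng = v},
        cyl (μ.concat δ.1 δ.2.2.1)) = 0 := by
  apply measure_mono_null _ hrec
  rintro p ⟨hpμ, hpU⟩
  simp only [Set.mem_iUnion, not_exists] at hpU
  intro hprec
  obtain ⟨lp, hl0, hls, hlr⟩ := hv
  have hlne : lp.arrows ≠ [] := by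
    intro h; rw [FinPath.length, h] at hl0; simp at hl0
  set a := lp.arrows.head hlne with ha
  have hsa : G.src a = v := by
    rw [← hls]
    exact lp.head_src a (by rw [List.head?_eq_head hlne]; rfl)
  set n := μ.arrows.length with hn
  obtain ⟨i, hi, hpi⟩ := hprec a (by rw [hsa]; exact ⟨lp, hl0, hls, hlr⟩) (n + 1)
  have hin : n < i := by omega
  -- define δ
  have hsrc_n : G.src (p.1 n) = μ.frng := src_at_length hpμ
  refine hpU ⟨⟨μ.frng, List.ofFn (fun j : Fin (i - n) => p.1 (n + j)), ?_, ?_⟩, ?_, ?_, ?_⟩ ?_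
  · intro b hb
    have : (List.ofFn (fun j : Fin (i - n) => p.1 (n + j))).head? = some (p.1 (n + 0)) := by
      have h0 : 0 < i - n := by omega
      rw [List.head?_eq_getElem?]
      rw [List.getElem?_eq_getElem (by simpa using h0)]
      simp
    rw [Option.mem_def, this, Option.some.injEq] at hb
    rw [← hb]
    simpa using hsrc_n
  · rw [List.Chain', List.isChain_iff_getElem]
    intro k hk
    simp only [List.length_ofFn] at hk
    simp only [List.getElem_ofFn]
    have := p.2 (n + k)
    convert this using 2 <;> rfl
  · simp only [FinPath.length, List.length_ofFn]; omega
  · rfl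
  · show (List.ofFn (fun j : Fin (i - n) => p.1 (n + j))).getLast?.elim μ.frng G.rng = v
    have hne : List.ofFn (fun j : Fin (i - n) => p.1 (n + j)) ≠ [] := by
      simp [List.ofFn_eq_nil_iff]; omega
    rw [List.getLast?_eq_getLast hne, List.getLast_eq_getElem]
    simp only [List.getElem_ofFn, List.length_ofFn, Option.elim_some]
    have h2 := p.2 (i - 1)
    have h3 : i - 1 + 1 = i := by omega
    rw [h3] at h2
    have key : G.rng (p.1 (i - 1)) = v := by rw [h2, hpi, hsa]
    rw [← key]
    rw [show n + (i - n - 1) = i - 1 by omega]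
  · constructor
    · exact hpμ.1
    · intro k hk
      show p.1 k = (μ.arrows ++ List.ofFn fun j : Fin (i - n) => p.1 (n + j)).get ⟨k, hk⟩
      by_cases hkn : k < n
      · rw [List.get_eq_getElem, List.getElem_append_left hkn]
        exact hpμ.2 k hkn
      · have hkl : k < (μ.arrows ++ List.ofFn fun j : Fin (i-n) => p.1 (n+j)).length := hk
        simp only [FinPath.concat, List.length_append, List.length_ofFn] at hkl
        rw [List.get_eq_getElem, List.getElem_append_right (by show n ≤ k; omega)]
        simp only [List.getElem_ofFn, Fin.coe_cast, Fin.val_mk]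
        rw [show n + (k - n) = k by omega]
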